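/- Let α, β_L, β_R, γ, δ_L, δ_R satisfy the configuration assumptions. Then tan∠B_LCB' = sin(β_L − δ_L)/((sin α/sin(β_R + γ/2))·(sin(γ/2 + δ_R)/sin(γ + δ_L + δ_R)) + cos(β_L − δ_L)). -/

import Mathlib

open Real EuclideanGeometry

lemma my_law_sin {V P : Type*} [NormedAddCommGroup V] [InnerProductSpace ℝ V] [MetricSpace P]
    [NormedAddTorsor V P] (a b c : P) :
    Real.sin (∠ a b c) * (dist a b * dist c b) = Real.sin (∠ a c b) * (dist a c * dist b c) := by
  rw [dist_eq_norm_vsub V a b, dist_eq_norm_vsub V c b, dist_eq_norm_vsub V a c,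
    dist_eq_norm_vsub V b c]
  unfold EuclideanGeometry.angle
  rw [InnerProductGeometry.sin_angle_mul_norm_mul_norm,
    InnerProductGeometry.sin_angle_mul_norm_mul_norm]
  congr 1
  have h1 : (a -ᵥ b : V) = (a -ᵥ c) - (b -ᵥ c) := (vsub_sub_vsub_cancel_right a b c).symm
  have h2 : (c -ᵥ b : V) = -(b -ᵥ c) := (neg_vsub_eq_vsub_rev b c).symm
  rw [h1, h2]
  simp only [inner_sub_left, inner_sub_right, inner_neg_left, inner_neg_right,
    real_inner_comm (a -ᵥ c : V) (b -ᵥ c)]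
  ring

/-- Proposition 3.9: formula for tan ∠B_LCB' in the configuration. -/
theorem stmt_15 (BL BR B' C : EuclideanSpace ℝ (Fin 2))
    (α βL βR γ δL δR : ℝ)
    (hα : α ∈ Set.Ioo 0 π) (hγ : γ ∈ Set.Ioo 0 π)
    (hδL : δL ∈ Set.Ico 0 (π / 2)) (hδR : δR ∈ Set.Ico 0 (π / 2))
    (hsum : γ + δL + δR < π)
    (hβL : βL - δL ∈ Set.Ioo 0 π)
    (hβRγ : βR + γ / 2 ∈ Set.Ioo 0 π)
    (h1 : BL ≠ B') (h2 : BR ≠ B') (h3 : BL ≠ BR) (h4 : BL ≠ C) (h5 : BR ≠ C)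
    (h6 : B' ≠ C)
    (hangBL : ∠ B' BL C = π - (βL - δL))
    (hangB' : ∠ BL B' BR = π - α)
    (hangBR : ∠ B' BR BL = βR + γ / 2)
    (hangC : ∠ BL C BR = π - (γ + δL + δR))
    (hangBRC : ∠ C BR BL = γ / 2 + δR)
    (hθ : ∠ BL C B' ∈ Set.Ioo 0 (π / 2)) :
    tan (∠ BL C B') =
      sin (βL - δL) /
        ((sin α / sin (βR + γ / 2)) * (sin (γ / 2 + δR) / sin (γ + δL + δR))
          + cos (βL - δL)) := by
  set θ := ∠ BL C B' with hθdef
  set A := βL - δL with hA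
  -- positivity of sines
  have hsinA : 0 < sin A := sin_pos_of_pos_of_lt_pi hβL.1 hβL.2
  have hsinα : 0 < sin α := sin_pos_of_pos_of_lt_pi hα.1 hα.2
  have hsinβ : 0 < sin (βR + γ / 2) := sin_pos_of_pos_of_lt_pi hβRγ.1 hβRγ.2
  have hsinγs : 0 < sin (γ + δL + δR) := by
    apply sin_pos_of_pos_of_lt_pi _ hsum
    have := hγ.1; have := hδL.1; have := hδR.1; linarith
  have hsinγδ : 0 < sin (γ / 2 + δR) := by
    apply sin_pos_of_pos_of_lt_pi
    · have := hγ.1; have := hδR.1; linarith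
    · have := hγ.2; have := hδR.2; have := pi_pos; linarith
  have hsinθ : 0 < sin θ := by
    apply sin_pos_of_pos_of_lt_pi hθ.1
    have := pi_pos; have := hθ.2; linarith
  have hcosθ : 0 < cos θ := cos_pos_of_mem_Ioo ⟨by have := hθ.1; have := pi_pos; linarith, hθ.2⟩
  -- distances
  have hbL : 0 < dist BL B' := dist_pos.2 h1
  have hcL : 0 < dist BL C := dist_pos.2 h4
  have hd : 0 < dist BL BR := dist_pos.2 h3
  have heB'C : 0 < dist B' C := dist_pos.2 h6
  have heBRB' : 0 < dist BR B' := dist_pos.2 h2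
  have heBRC : 0 < dist BR C := dist_pos.2 h5
  -- angle at B' in triangle B' BL C
  have hsum1 : ∠ B' BL C + ∠ BL C B' + ∠ C B' BL = π :=
    angle_add_angle_add_angle_eq_pi C h1
  have hangCB'BL : ∠ C B' BL = A - θ := by
    rw [hangBL] at hsum1; linarith
  -- law of sines in triangle BL B' C
  have eq1 : sin (A - θ) * dist BL B' = sin θ * dist BL C := by
    have h := my_law_sin BL B' C
    rw [angle_comm BL B' C, hangCB'BL, dist_comm C B'] at h
    refine mul_right_cancel₀ (ne_of_gt heB'C) ?_
    linear_combination h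
  -- law of sines in triangle BL BR B'
  have eq2 : sin (βR + γ / 2) * dist BL BR = sin α * dist BL B' := by
    have h := my_law_sin BL BR B'
    rw [angle_comm BL BR B', hangBR, hangB', Real.sin_pi_sub, dist_comm B' BR] at h
    refine mul_right_cancel₀ (ne_of_gt heBRB') ?_
    linear_combination h
  -- law of sines in triangle BL BR C
  have eq3 : sin (γ / 2 + δR) * dist BL BR = sin (γ + δL + δR) * dist BL C := by
    have h := my_law_sin BL BR C
    rw [angle_comm BL BR C, hangBRC, hangC, Real.sin_pi_sub, dist_comm C BR] at h
    refine mul_right_cancel₀ (ne_of_gt heBRC) ?_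
    linear_combination h
  -- identify the ratio
  have hK : (sin α / sin (βR + γ / 2)) * (sin (γ / 2 + δR) / sin (γ + δL + δR))
      = dist BL C / dist BL B' := by
    rw [div_mul_div_comm, div_eq_div_iff (by positivity) (ne_of_gt hbL)]
    nlinarith [eq2, eq3, hd.le, hsinα.le, hsinγδ.le]
  rw [hK]
  have hratio : dist BL C / dist BL B' = sin (A - θ) / sin θ := by
    rw [div_eq_div_iff (ne_of_gt hbL) (ne_of_gt hsinθ)]
    linarith [eq1]
  rw [hratio]
  have hden : sin (A - θ) / sin θ + cos A = sin A * cos θ / sin θ := by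
    rw [Real.sin_sub, div_add' _ _ _ (ne_of_gt hsinθ)]
    ring_nf
  rw [hden, Real.tan_eq_sin_div_cos, div_div_eq_mul_div,
    mul_div_mul_left _ _ (ne_of_gt hsinA)]
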